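/- (Theorem 3.1, (ii) ⇒ (iii)) Assume (ii): there exists C2 > 0 such that for all θ ∈ (0,1), all t > 0 and all u0 ∈ L²(Ω), ‖S(t)u0‖ ≤ e^{C2(1 + (1/(θ t))^{σ/(1−σ)})} ‖u0‖^θ ‖S(t)u0‖_ω^{1−θ}. Then (iii) holds: there exists C3 > 0 such that for all ε > 0, all t > 0 and all u0 ∈ L²(Ω), ‖S(t)u0‖² ≤ e^{C3(1 + (1/t)^{σ/(1−σ)})} e^{((C3/t) ln(e + 1/ε))^σ} ‖S(t)u0‖_ω² + ε ‖u0‖². -/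

import Mathlib

open MeasureTheory Set Filter
open scoped RealInnerProductSpace

noncomputable section

/-- The heat semigroup `S(t)u0 = sum_j e^{-lam_j t} <u0, Phi_j> Phi_j` on `L2(Omega)`,
given a Hilbert basis `B` of eigenfunctions and eigenvalues `lam`. -/
noncomputable def heatSG {d : ℕ} {Ω : Set (EuclideanSpace ℝ (Fin d))}
    (B : HilbertBasis ℕ ℝ (Lp ℝ 2 (volume.restrict Ω))) (lam : ℕ → ℝ)
    (t : ℝ) (u : Lp ℝ 2 (volume.restrict Ω)) : Lp ℝ 2 (volume.restrict Ω) :=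
  ∑' j, (Real.exp (-(lam j) * t) * ⟪u, B j⟫) • B j

/-- Multiplication by the indicator function `1_omega` on `L2(Omega)`. -/
noncomputable def indLp {d : ℕ} {Ω : Set (EuclideanSpace ℝ (Fin d))}
    (ω : Set (EuclideanSpace ℝ (Fin d))) (hω : MeasurableSet ω)
    (f : Lp ℝ 2 (volume.restrict Ω)) : Lp ℝ 2 (volume.restrict Ω) :=
  MemLp.toLp (ω.indicator ⇑f) ((Lp.memLp f).indicator hω)

/-- Squaring commutes with real powers of nonnegative reals. -/
lemma sq_rpow_aux (a : ℝ) (ha : 0 ≤ a) (e : ℝ) : (a ^ e) ^ 2 = (a ^ 2) ^ e := by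
  rw [← Real.rpow_natCast (a ^ e) 2, ← Real.rpow_natCast a 2,
    ← Real.rpow_mul ha, ← Real.rpow_mul ha, mul_comm]

/-- Young-type splitting of a geometric mean. -/
lemma young_split_aux {D ε X Y θ M : ℝ} (hD : 0 < D) (hε : 0 < ε) (hX : 0 ≤ X) (hY : 0 ≤ Y)
    (hθ0 : 0 < θ) (hθ1 : θ < 1) (hM : D * (D / ε) ^ (θ / (1 - θ)) ≤ M) :
    D * (X ^ θ * Y ^ (1 - θ)) ≤ ε * X + M * Y := by
  have h1θ : 0 < 1 - θ := by linarith
  set a := ε / D with ha_def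
  have ha : 0 < a := div_pos hε hD
  set b := a ^ (-(θ / (1 - θ))) with hb_def
  have hb : 0 < b := Real.rpow_pos_of_pos ha _
  have key : (a * X) ^ θ * (b * Y) ^ (1 - θ) ≤ θ * (a * X) + (1 - θ) * (b * Y) :=
    Real.geom_mean_le_arith_mean2_weighted hθ0.le h1θ.le (by positivity) (by positivity)
      (by ring)
  have hab : a ^ θ * b ^ (1 - θ) = 1 := by
    rw [hb_def, ← Real.rpow_mul ha.le]
    have : -(θ / (1 - θ)) * (1 - θ) = -θ := by field_simp
    rw [this, ← Real.rpow_add ha, add_neg_cancel, Real.rpow_zero]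
  have expand : (a * X) ^ θ * (b * Y) ^ (1 - θ) = X ^ θ * Y ^ (1 - θ) := by
    rw [Real.mul_rpow ha.le hX, Real.mul_rpow hb.le hY]
    calc a ^ θ * X ^ θ * (b ^ (1 - θ) * Y ^ (1 - θ))
        = (a ^ θ * b ^ (1 - θ)) * (X ^ θ * Y ^ (1 - θ)) := by ring
      _ = X ^ θ * Y ^ (1 - θ) := by rw [hab, one_mul]
  have step1 : X ^ θ * Y ^ (1 - θ) ≤ a * X + b * Y := by
    have hax : 0 ≤ a * X := by positivity
    have hby : 0 ≤ b * Y := by positivity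
    nlinarith [key, expand]
  have hDa : D * a = ε := by rw [ha_def]; field_simp
  have hDb : D * b ≤ M := by
    have hbeq : b = (D / ε) ^ (θ / (1 - θ)) := by
      rw [hb_def, Real.rpow_neg ha.le, ← Real.inv_rpow ha.le]
      congr 1
      rw [ha_def, inv_div]
    rw [hbeq]; exact hM
  calc D * (X ^ θ * Y ^ (1 - θ)) ≤ D * (a * X + b * Y) := by
        exact mul_le_mul_of_nonneg_left step1 hD.le
    _ = (D * a) * X + (D * b) * Y := by ring
    _ = ε * X + (D * b) * Y := by rw [hDa]
    _ ≤ ε * X + M * Y := by nlinarith [mul_le_mul_of_nonneg_right hDb hY]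

set_option maxHeartbeats 1600000 in
/-- Theorem 3.1, (ii) ⇒ (iii). -/
theorem observation_implies_observation_with_eps
    (d : ℕ) (hd : 1 ≤ d) (Ω ω : Set (EuclideanSpace ℝ (Fin d)))
    (hΩo : IsOpen Ω) (hΩb : Bornology.IsBounded Ω) (hΩc : IsConnected Ω)
    (hωo : IsOpen ω) (hωne : ω.Nonempty) (hωΩ : ω ⊆ Ω) (hωm : MeasurableSet ω)
    (B : HilbertBasis ℕ ℝ (Lp ℝ 2 (volume.restrict Ω)))
    (lam : ℕ → ℝ) (hpos : ∀ j, 0 < lam j) (hmono : Monotone lam)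
    (hlim : Tendsto lam atTop atTop)
    (σ : ℝ) (hσ : σ ∈ Ioo (0:ℝ) 1)
    -- (ii)
    (hii : ∃ C2 > 0, ∀ θ ∈ Ioo (0:ℝ) 1, ∀ t > 0, ∀ u0 : Lp ℝ 2 (volume.restrict Ω),
      ‖heatSG B lam t u0‖ ≤
        Real.exp (C2 * (1 + (1 / (θ * t)) ^ (σ / (1 - σ)))) *
          ‖u0‖ ^ θ * ‖indLp ω hωm (heatSG B lam t u0)‖ ^ (1 - θ)) :
    -- (iii)
    ∃ C3 > 0, ∀ ε > 0, ∀ t > 0, ∀ u0 : Lp ℝ 2 (volume.restrict Ω),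
      ‖heatSG B lam t u0‖ ^ 2 ≤
        Real.exp (C3 * (1 + (1 / t) ^ (σ / (1 - σ)))) *
          Real.exp ((C3 / t * Real.log (Real.exp 1 + 1 / ε)) ^ σ) *
            ‖indLp ω hωm (heatSG B lam t u0)‖ ^ 2
        + ε * ‖u0‖ ^ 2 := by
  obtain ⟨hσ0, hσ1⟩ := hσ
  obtain ⟨C2, hC2, hobs⟩ := hii
  have h1σ : 0 < 1 - σ := by linarith
  set α := σ / (1 - σ) with hα_def
  clear_value α
  have hα0 : 0 < α := by rw [hα_def]; exact div_pos hσ0 h1σ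
  have h4α : 0 < (4:ℝ) ^ α := Real.rpow_pos_of_pos (by norm_num) _
  set K := 4 * C2 * (1 + (4:ℝ) ^ α) + 1 with hK_def
  clear_value K
  have hK1 : 1 ≤ K := by rw [hK_def]; nlinarith
  have hKpos : 0 < K := by linarith
  set C3 := K ^ (1 / σ) with hC3_def
  clear_value C3
  have hC3pos : 0 < C3 := by rw [hC3_def]; exact Real.rpow_pos_of_pos hKpos _
  have hC3K : K ≤ C3 := by
    rw [hC3_def]
    calc K = K ^ (1:ℝ) := (Real.rpow_one K).symm
      _ ≤ K ^ (1 / σ) := Real.rpow_le_rpow_of_exponent_le hK1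
          (by rw [le_div_iff₀ hσ0]; linarith)
  have hC3σ : C3 ^ σ = K := by
    rw [hC3_def, ← Real.rpow_mul hKpos.le, one_div_mul_cancel (ne_of_gt hσ0),
      Real.rpow_one]
  refine ⟨C3, hC3pos, ?_⟩
  intro ε hε t ht u0
  set y := heatSG B lam t u0 with hy_def
  set z := indLp ω hωm y with hz_def
  clear_value z
  clear_value y
  set L := Real.log (Real.exp 1 + 1 / ε) with hL_def
  clear_value L
  have hL : 1 ≤ L := by
    rw [hL_def, Real.le_log_iff_exp_le (by positivity)]
    have : 0 < 1 / ε := by positivity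
    linarith
  have hLpos : 0 < L := lt_of_lt_of_le one_pos hL
  set x := t ^ σ * L ^ (1 - σ) with hx_def
  clear_value x
  have hx : 0 < x := by rw [hx_def]; positivity
  set θ := 1 / (2 * (1 + x)) with hθ_def
  clear_value θ
  have hθ0 : 0 < θ := by rw [hθ_def]; positivity
  have hθhalf : θ ≤ 1 / 2 := by
    rw [hθ_def]
    rw [div_le_div_iff₀ (by positivity) (by norm_num)]
    nlinarith
  have hθ1 : θ < 1 := lt_of_le_of_lt hθhalf (by norm_num)
  have h1θ : 0 < 1 - θ := by linarith
  have hobs' := hobs θ ⟨hθ0, hθ1⟩ t ht u0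
  rw [← hy_def, ← hz_def] at hobs'
  clear hobs hlim hmono hpos hy_def hz_def hΩo hΩb hΩc hωo hωne hωΩ hd
  set P := C2 * (1 + (1 / (θ * t)) ^ α) with hP_def
  clear_value P
  have hP0 : 0 ≤ P := by
    have : (0:ℝ) ≤ (1 / (θ * t)) ^ α := Real.rpow_nonneg (by positivity) _
    rw [hP_def]; nlinarith
  set c := θ / (1 - θ) with hc_def
  clear_value c
  have hc0 : 0 ≤ c := by rw [hc_def]; positivity
  have hc1 : c ≤ 1 := by rw [hc_def, div_le_one h1θ]; linarith
  have hc2θ : c ≤ 2 * θ := by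
    rw [hc_def, div_le_iff₀ h1θ]; nlinarith
  -- the main exponent inequality
  have hu : (0:ℝ) ≤ (1 / t) ^ α := Real.rpow_nonneg (by positivity) _
  have hv : (0:ℝ) ≤ (L / t) ^ σ := Real.rpow_nonneg (by positivity) _
  have hA : (1 / (θ * t)) ^ α ≤ 4 ^ α * ((1 / t) ^ α + (L / t) ^ σ) := by
    have e0 : 1 / (θ * t) = (2 * (1 + x)) * (1 / t) := by
      rw [hθ_def]
      field_simp
    have e1 : (1 / (θ * t)) ^ α = (2 * (1 + x)) ^ α * (1 / t) ^ α := by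
      rw [e0, Real.mul_rpow (by positivity) (by positivity)]
    have e2 : (2 * (1 + x)) ^ α ≤ 4 ^ α * (1 + x ^ α) := by
      have h2a : (2 * (1 + x)) ^ α = 2 ^ α * (1 + x) ^ α :=
        Real.mul_rpow (by norm_num) (by positivity)
      have h44 : (2:ℝ) ^ α * 2 ^ α = 4 ^ α := by
        rw [← Real.mul_rpow (by norm_num) (by norm_num)]; norm_num
      have h1x : (1 + x) ^ α ≤ 2 ^ α * (1 + x ^ α) := by
        rcases le_total x 1 with hx1 | hx1
        · have : (1 + x) ^ α ≤ (2:ℝ) ^ α :=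
            Real.rpow_le_rpow (by positivity) (by linarith) hα0.le
          have hxa : 0 ≤ x ^ α := Real.rpow_nonneg hx.le _
          nlinarith [Real.rpow_pos_of_pos (show (0:ℝ) < 2 by norm_num) α]
        · have h2x : (1 + x) ^ α ≤ (2 * x) ^ α :=
            Real.rpow_le_rpow (by positivity) (by linarith) hα0.le
          have : (2 * x) ^ α = 2 ^ α * x ^ α := Real.mul_rpow (by norm_num) hx.le
          have h2p : (0:ℝ) < 2 ^ α := Real.rpow_pos_of_pos (by norm_num) _
          nlinarith
      calc (2 * (1 + x)) ^ α = 2 ^ α * (1 + x) ^ α := h2a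
        _ ≤ 2 ^ α * (2 ^ α * (1 + x ^ α)) := by
            have h2p : (0:ℝ) < 2 ^ α := Real.rpow_pos_of_pos (by norm_num) _
            nlinarith
        _ = 4 ^ α * (1 + x ^ α) := by rw [← mul_assoc, h44]
    have e3 : x ^ α * (1 / t) ^ α = (L / t) ^ σ := by
      have key : x * (1 / t) = (L / t) ^ (1 - σ) := by
        rw [hx_def, Real.div_rpow hLpos.le ht.le, Real.rpow_sub ht, Real.rpow_one]
        have htσ : (0:ℝ) < t ^ σ := Real.rpow_pos_of_pos ht _
        field_simp
      rw [← Real.mul_rpow hx.le (by positivity), key, ← Real.rpow_mul (by positivity)]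
      congr 1
      rw [hα_def]
      field_simp
    calc (1 / (θ * t)) ^ α = (2 * (1 + x)) ^ α * (1 / t) ^ α := e1
      _ ≤ (4 ^ α * (1 + x ^ α)) * (1 / t) ^ α := by
          exact mul_le_mul_of_nonneg_right e2 hu
      _ = 4 ^ α * ((1 / t) ^ α + x ^ α * (1 / t) ^ α) := by ring
      _ = 4 ^ α * ((1 / t) ^ α + (L / t) ^ σ) := by rw [e3]
  have h2θL : 2 * θ * L ≤ (L / t) ^ σ := by
    have e4 : 2 * θ * L = L / (1 + x) := by
      rw [hθ_def]; field_simp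
    have e5 : L / (1 + x) ≤ L / x := by
      apply div_le_div_of_nonneg_left hLpos.le hx
      linarith
    have e6 : L / x = (L / t) ^ σ := by
      rw [Real.div_rpow hLpos.le ht.le, hx_def]
      have : L ^ σ = L / L ^ (1 - σ) := by
        calc L ^ σ = L ^ ((1:ℝ) - (1 - σ)) := by norm_num
          _ = L ^ (1:ℝ) / L ^ (1 - σ) := Real.rpow_sub hLpos _ _
          _ = L / L ^ (1 - σ) := by rw [Real.rpow_one]
      rw [this, div_div, mul_comm (L ^ (1 - σ)) (t ^ σ)]
    rw [e4, ← e6] at *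
    linarith
  have core : 2 * P + (2 * P - Real.log ε) * c ≤
      C3 * (1 + (1 / t) ^ α) + (C3 / t * L) ^ σ := by
    have hlogε : -Real.log ε ≤ L := by
      have h1 : Real.log (1 / ε) = -Real.log ε := by
        rw [one_div, Real.log_inv]
      have h2 : Real.log (1 / ε) ≤ L := by
        rw [hL_def]
        apply Real.log_le_log (by positivity)
        linarith [Real.exp_pos 1]
      linarith
    have step : 2 * P + (2 * P - Real.log ε) * c ≤ 4 * P + 2 * θ * L := by
      have hmc : (2 * P - Real.log ε) * c ≤ (2 * P + L) * c := by
        apply mul_le_mul_of_nonneg_right _ hc0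
        linarith
      have h2Pc : 2 * P * c ≤ 2 * P := by nlinarith
      have hLc : L * c ≤ L * (2 * θ) := by
        exact mul_le_mul_of_nonneg_left hc2θ hLpos.le
      nlinarith
    have hRHS : (C3 / t * L) ^ σ = C3 ^ σ * (L / t) ^ σ := by
      rw [show C3 / t * L = C3 * (L / t) by ring,
        Real.mul_rpow hC3pos.le (by positivity)]
    have final : 4 * P + 2 * θ * L ≤ C3 * (1 + (1 / t) ^ α) + C3 ^ σ * (L / t) ^ σ := by
      have e1 : 4 * C2 ≤ C3 := by nlinarith
      have e2 : 4 * C2 * (4:ℝ) ^ α ≤ C3 := by nlinarith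
      have e3 : 4 * C2 * (4:ℝ) ^ α + 1 ≤ C3 ^ σ := by rw [hC3σ]; nlinarith
      have hAmul : 4 * C2 * (1 / (θ * t)) ^ α ≤
          4 * C2 * (4 ^ α * ((1 / t) ^ α + (L / t) ^ σ)) := by
        apply mul_le_mul_of_nonneg_left hA (by positivity)
      have hm2 : 4 * C2 * (4:ℝ) ^ α * ((1 / t) ^ α) ≤ C3 * ((1 / t) ^ α) :=
        mul_le_mul_of_nonneg_right e2 hu
      have hm3 : (4 * C2 * (4:ℝ) ^ α + 1) * ((L / t) ^ σ) ≤ C3 ^ σ * ((L / t) ^ σ) :=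
        mul_le_mul_of_nonneg_right e3 hv
      rw [hP_def]
      linarith [hAmul, h2θL, e1, hm2, hm3]
    rw [hRHS]
    linarith
  -- assemble
  have hM : Real.exp (2 * P) * (Real.exp (2 * P) / ε) ^ (θ / (1 - θ)) ≤
      Real.exp (C3 * (1 + (1 / t) ^ α)) * Real.exp ((C3 / t * L) ^ σ) := by
    rw [Real.rpow_def_of_pos (by positivity), Real.log_div (Real.exp_ne_zero _)
      (ne_of_gt hε), Real.log_exp, ← Real.exp_add, ← Real.exp_add, Real.exp_le_exp]
    rw [← hc_def]
    linarith [core]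
  have hX2 : (0:ℝ) ≤ ‖u0‖ ^ 2 := by positivity
  have hY2 : (0:ℝ) ≤ ‖z‖ ^ 2 := by positivity
  have young := young_split_aux (Real.exp_pos (2 * P)) hε hX2 hY2 hθ0 hθ1 hM
  have step1 : ‖y‖ ^ 2 ≤ (Real.exp P * ‖u0‖ ^ θ * ‖z‖ ^ (1 - θ)) ^ 2 :=
    pow_le_pow_left₀ (norm_nonneg y) hobs' 2
  have step2 : (Real.exp P * ‖u0‖ ^ θ * ‖z‖ ^ (1 - θ)) ^ 2 =
      Real.exp (2 * P) * ((‖u0‖ ^ 2) ^ θ * (‖z‖ ^ 2) ^ (1 - θ)) := by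
    have e1 : (‖u0‖ ^ θ) ^ 2 = (‖u0‖ ^ 2) ^ θ := sq_rpow_aux _ (norm_nonneg _) _
    have e2 : (‖z‖ ^ (1 - θ)) ^ 2 = (‖z‖ ^ 2) ^ (1 - θ) := sq_rpow_aux _ (norm_nonneg _) _
    have e3 : Real.exp P ^ 2 = Real.exp (2 * P) := by
      rw [sq, ← Real.exp_add]; ring_nf
    rw [mul_pow, mul_pow, e1, e2, e3]
    ring
  calc ‖y‖ ^ 2 ≤ Real.exp (2 * P) * ((‖u0‖ ^ 2) ^ θ * (‖z‖ ^ 2) ^ (1 - θ)) := by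
        rw [← step2]; exact step1
    _ ≤ ε * ‖u0‖ ^ 2 + Real.exp (C3 * (1 + (1 / t) ^ α)) * Real.exp ((C3 / t * L) ^ σ) *
        ‖z‖ ^ 2 := young
    _ = Real.exp (C3 * (1 + (1 / t) ^ α)) * Real.exp ((C3 / t * L) ^ σ) * ‖z‖ ^ 2
        + ε * ‖u0‖ ^ 2 := by ring
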